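/- Let V ∈ ℝ^{N×k} with VᵀV = I_k and write y_i = Vᵀδ_i. Let s_1,...,s_n be distinct indices, and define recursively f_m = (y_{s_m} − ∑_{l<m} f_l (f_lᵀ y_{s_m})) / √(y_{s_m}ᵀ y_{s_m} − ∑_{l<m} (f_lᵀ y_{s_m})²), assuming all square-root arguments are positive. Then for all i, j: ∑_{l=1}^n (f_lᵀ y_i)(f_lᵀ y_j) = P_{S_n,i}ᵀ P_{S_n}^{−1} P_{S_n,j}, where P = VVᵀ and S_n = {s_1,...,s_n}. -/

import Mathlib

open Matrix BigOperators

/-- Principal submatrix of `P` indexed by the subset `S`. -/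
def principalSub {N : ℕ} (P : Matrix (Fin N) (Fin N) ℝ) (S : Finset (Fin N)) :
    Matrix {i // i ∈ S} {i // i ∈ S} ℝ :=
  Matrix.of fun i j => P i.1 j.1

/-- The column vector `(P_{s,i})_{s ∈ S}`. -/
def colSub {N : ℕ} (P : Matrix (Fin N) (Fin N) ℝ) (S : Finset (Fin N)) (i : Fin N) :
    {s // s ∈ S} → ℝ :=
  fun s => P s.1 i

/-- The quadratic form `P_{S,i}ᵀ P_S⁻¹ P_{S,j}`. -/
noncomputable def quadForm {N : ℕ} (P : Matrix (Fin N) (Fin N) ℝ) (S : Finset (Fin N))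
    (i j : Fin N) : ℝ :=
  colSub P S i ⬝ᵥ ((principalSub P S)⁻¹ *ᵥ colSub P S j)

/-- The set `S_m = {s_1, …, s_m}` of the first `m` selected indices. -/
def prefixSet {N n : ℕ} (s : Fin n → Fin N) (m : ℕ) : Finset (Fin N) :=
  (Finset.univ.filter fun l : Fin n => (l : ℕ) < m).image s

private lemma sum_dotProduct' {m : Type*} [Fintype m] {ι : Type*} (t : Finset ι)
    (v : ι → m → ℝ) (w : m → ℝ) : (∑ l ∈ t, v l) ⬝ᵥ w = ∑ l ∈ t, v l ⬝ᵥ w := by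
  simp [dotProduct, Finset.sum_mul, Finset.sum_comm (s := t)]

theorem gram_schmidt_sampler_correct {N k n : ℕ}
    (V : Matrix (Fin N) (Fin k) ℝ) (hV : Vᵀ * V = 1)
    (y : Fin N → Fin k → ℝ) (hy : ∀ i, y i = Vᵀ *ᵥ Pi.single i 1)
    (s : Fin n → Fin N) (hs : Function.Injective s)
    (f : Fin n → Fin k → ℝ)
    (hpos : ∀ m : Fin n,
      0 < y (s m) ⬝ᵥ y (s m) -
        ∑ l ∈ Finset.univ.filter (· < m), (f l ⬝ᵥ y (s m)) ^ 2)
    (hf : ∀ m : Fin n,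
      f m = (Real.sqrt (y (s m) ⬝ᵥ y (s m) -
          ∑ l ∈ Finset.univ.filter (· < m), (f l ⬝ᵥ y (s m)) ^ 2))⁻¹ •
        (y (s m) - ∑ l ∈ Finset.univ.filter (· < m), (f l ⬝ᵥ y (s m)) • f l))
    (hinv : ∀ m : ℕ, m ≤ n → IsUnit (principalSub (V * Vᵀ) (prefixSet s m)).det) :
    ∀ i j : Fin N,
      ∑ l : Fin n, (f l ⬝ᵥ y i) * (f l ⬝ᵥ y j) = quadForm (V * Vᵀ) (prefixSet s n) i j := by
  classical
  -- abbreviation for the normalization constant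
  set d : Fin n → ℝ := fun m => y (s m) ⬝ᵥ y (s m) -
      ∑ l ∈ Finset.univ.filter (· < m), (f l ⬝ᵥ y (s m)) ^ 2 with hd
  have hdpos : ∀ m, 0 < d m := hpos
  have hsqrt_pos : ∀ m, 0 < Real.sqrt (d m) := fun m => Real.sqrt_pos.2 (hdpos m)
  have hsqrt_ne : ∀ m, Real.sqrt (d m) ≠ 0 := fun m => (hsqrt_pos m).ne'
  -- dot products of y's are entries of P
  have hyy : ∀ a b : Fin N, y a ⬝ᵥ y b = (V * Vᵀ) a b := by
    intro a b
    rw [hy, hy, Matrix.mulVec_single, Matrix.mulVec_single]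
    simp [dotProduct, Matrix.mul_apply, Matrix.transpose_apply, mul_comm]
  -- expansion of `f m ⬝ᵥ w`
  have hfd : ∀ (m : Fin n) (w : Fin k → ℝ), f m ⬝ᵥ w =
      (Real.sqrt (d m))⁻¹ * (y (s m) ⬝ᵥ w -
        ∑ l ∈ Finset.univ.filter (· < m), (f l ⬝ᵥ y (s m)) * (f l ⬝ᵥ w)) := by
    intro m w
    conv_lhs => rw [hf m]
    rw [smul_dotProduct, sub_dotProduct, sum_dotProduct']
    simp [smul_dotProduct, smul_eq_mul]
    exact Or.inl rfl
  -- the diagonal coefficient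
  have hcm : ∀ m : Fin n, f m ⬝ᵥ y (s m) = Real.sqrt (d m) := by
    intro m
    rw [hfd m (y (s m))]
    have : ∑ l ∈ Finset.univ.filter (· < m), (f l ⬝ᵥ y (s m)) * (f l ⬝ᵥ y (s m)) =
        ∑ l ∈ Finset.univ.filter (· < m), (f l ⬝ᵥ y (s m)) ^ 2 := by
      simp [sq]
    rw [this]
    have hdm : y (s m) ⬝ᵥ y (s m) - ∑ l ∈ Finset.univ.filter (· < m),
        (f l ⬝ᵥ y (s m)) ^ 2 = d m := rfl
    rw [hdm, ← Real.sqrt_mul_self (hdpos m).le]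
    rw [Real.sqrt_mul_self (hdpos m).le]
    nth_rewrite 2 [← Real.mul_self_sqrt (hdpos m).le]
    rw [← mul_assoc, inv_mul_cancel₀ (hsqrt_ne m), one_mul]
  -- orthonormality
  have key : ∀ t : ℕ, ∀ l m : Fin n, (l : ℕ) < t → (m : ℕ) < t →
      f l ⬝ᵥ f m = if l = m then 1 else 0 := by
    intro t
    induction t with
    | zero => intro l m hl hm; omega
    | succ t ih =>
      -- first : if all pairs below are orthonormal, then f m ⊥ f l for l < m
      have step : ∀ m l : Fin n, (m : ℕ) ≤ t → l < m → f m ⬝ᵥ f l = 0 := by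
        intro m l hm hl
        rw [hfd m (f l)]
        have hsum : ∑ l' ∈ Finset.univ.filter (· < m), (f l' ⬝ᵥ y (s m)) * (f l' ⬝ᵥ f l) =
            f l ⬝ᵥ y (s m) := by
          rw [Finset.sum_eq_single_of_mem (s := Finset.univ.filter (· < m)) l
            (by simp [hl]) (fun b hb hbl => by
              rw [ih b l (lt_of_lt_of_le (Finset.mem_filter.1 hb).2 hm)
                (lt_of_lt_of_le hl hm)]
              simp [hbl])]
          rw [ih l l (lt_of_lt_of_le hl hm) (lt_of_lt_of_le hl hm)]
          simp

        rw [hsum, dotProduct_comm (y (s m)) (f l)]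
        simp
      intro l m hl hm
      rcases lt_or_ge (l : ℕ) t with h1 | h1
      · rcases lt_or_ge (m : ℕ) t with h2 | h2
        · exact ih l m h1 h2
        · -- m has value t, l < m
          have hmt : (m : ℕ) = t := by omega
          have hlm : l < m := by
            rw [Fin.lt_def]; omega
          have : l ≠ m := Fin.ne_of_lt hlm
          rw [dotProduct_comm, step m l (le_of_eq hmt) hlm]
          simp [this]
      · rcases lt_or_ge (m : ℕ) t with h2 | h2
        · have hlt : (l : ℕ) = t := by omega
          have hml : m < l := by rw [Fin.lt_def]; omega
          have : l ≠ m := (Fin.ne_of_lt hml).symm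
          rw [step l m (le_of_eq hlt) hml]
          simp [this]
        · -- l = m, value t : diagonal
          have : l = m := by
            apply Fin.ext; omega
          subst this
          rw [hfd l (f l)]
          have hsum : ∑ l' ∈ Finset.univ.filter (· < l), (f l' ⬝ᵥ y (s l)) * (f l' ⬝ᵥ f l) = 0 := by
            apply Finset.sum_eq_zero
            intro b hb
            have hbl : b < l := (Finset.mem_filter.1 hb).2
            rw [dotProduct_comm (f b) (f l), step l b (by omega) hbl]
            ring
          rw [hsum, dotProduct_comm (y (s l)) (f l), hcm l]
          simp [hsqrt_ne l, if_pos rfl]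
  have ortho : ∀ l m : Fin n, f l ⬝ᵥ f m = if l = m then 1 else 0 := fun l m =>
    key n l m l.2 m.2
  -- f l ⊥ y (s m) for m < l
  have hspan0 : ∀ m : Fin n, y (s m) = Real.sqrt (d m) • f m +
      ∑ l ∈ Finset.univ.filter (· < m), (f l ⬝ᵥ y (s m)) • f l := by
    intro m
    rw [hf m, smul_smul, mul_inv_cancel₀ (hsqrt_ne m), one_smul]
    abel
  have hzero : ∀ l m : Fin n, m < l → f l ⬝ᵥ y (s m) = 0 := by
    intro l m hml
    rw [dotProduct_comm, hspan0 m, add_dotProduct, smul_dotProduct,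
      sum_dotProduct']
    rw [ortho m l, if_neg (Fin.ne_of_lt hml)]
    rw [Finset.sum_eq_zero]
    · simp
    · intro b hb
      have hbl : b ≠ l := Fin.ne_of_lt (lt_trans (Finset.mem_filter.1 hb).2 hml)
      rw [smul_dotProduct, ortho b l, if_neg hbl]
      simp
  -- the key projection identity: `y (s m)` lies in the span of the `f`'s
  have hdot : ∀ (m : Fin n) (w : Fin k → ℝ), y (s m) ⬝ᵥ w =
      ∑ t : Fin n, (f t ⬝ᵥ y (s m)) * (f t ⬝ᵥ w) := by
    intro m w
    rw [← Finset.sum_filter_add_sum_filter_not Finset.univ (· < m)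
      (fun t => (f t ⬝ᵥ y (s m)) * (f t ⬝ᵥ w))]
    have h2 : ∑ t ∈ Finset.univ.filter (fun t => ¬ t < m), (f t ⬝ᵥ y (s m)) * (f t ⬝ᵥ w) =
        Real.sqrt (d m) * (f m ⬝ᵥ w) := by
      rw [Finset.sum_eq_single_of_mem (s := Finset.univ.filter (fun t => ¬ t < m)) m
        (by simp) (fun b hb hbm => by
          have hne : (b : ℕ) ≠ (m : ℕ) := fun hh => hbm (Fin.ext hh)
          have h' : ¬ b < m := (Finset.mem_filter.1 hb).2
          have : m < b := by rw [Fin.lt_def] at h' ⊢; omega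
          rw [hzero b m this]; ring)]
      rw [hcm m]
    rw [h2]
    conv_lhs => rw [hspan0 m]
    rw [add_dotProduct, smul_dotProduct, sum_dotProduct', add_comm, smul_eq_mul]
    congr 1
    refine Finset.sum_congr rfl fun b _ => ?_
    rw [smul_dotProduct, smul_eq_mul]
  -- the matrix part
  intro i j
  set S := prefixSet s n with hS
  have hmemS : ∀ l : Fin n, s l ∈ S := by
    intro l
    exact Finset.mem_image.2 ⟨l, by simp [l.2], rfl⟩
  have hbij : Function.Bijective (fun l : Fin n => (⟨s l, hmemS l⟩ : {x // x ∈ S})) := by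
    constructor
    · intro a b hab
      exact hs (congrArg Subtype.val hab)
    · rintro ⟨x, hx⟩
      rcases Finset.mem_image.1 hx with ⟨l, _, rfl⟩
      exact ⟨l, rfl⟩
  set e : Fin n ≃ {x // x ∈ S} := Equiv.ofBijective _ hbij with he
  have heval : ∀ l : Fin n, ((e l : {x // x ∈ S}) : Fin N) = s l := fun l => rfl
  set R : Matrix (Fin n) (Fin n) ℝ := Matrix.of (fun t m => f t ⬝ᵥ y (s m)) with hRdef
  set g : Fin N → Fin n → ℝ := fun a t => f t ⬝ᵥ y a with hg
  -- R is invertible (upper triangular with positive diagonal)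
  have hRtri : R.BlockTriangular id := fun a b hab => hzero a b hab
  have hRu : IsUnit R.det := by
    rw [Matrix.det_of_upperTriangular hRtri]
    refine isUnit_iff_ne_zero.2 (Finset.prod_ne_zero_iff.2 fun m _ => ?_)
    show f m ⬝ᵥ y (s m) ≠ 0
    rw [hcm m]; exact hsqrt_ne m
  have hRtu : IsUnit Rᵀ.det := by rwa [Matrix.det_transpose]
  set B := principalSub (V * Vᵀ) S with hB
  -- reindexing the principal submatrix gives RᵀR
  have hBsub : B.submatrix e e = Rᵀ * R := by
    ext t m
    show (V * Vᵀ) (s t) (s m) = (Rᵀ * R) t m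
    rw [← hyy, hdot t (y (s m)), Matrix.mul_apply]
    rfl
  have hBinv : (B⁻¹).submatrix e e = (Rᵀ * R)⁻¹ := by
    have h1 : B.submatrix ⇑e ⇑e = Matrix.reindex e.symm e.symm B := rfl
    have h2 : (B⁻¹).submatrix ⇑e ⇑e = Matrix.reindex e.symm e.symm B⁻¹ := rfl
    rw [h2, ← Matrix.inv_reindex e.symm e.symm B, ← h1, hBsub]
  -- the reindexed column vectors
  have hcol : ∀ a : Fin N, (fun t => colSub (V * Vᵀ) S a (e t)) = Rᵀ *ᵥ g a := by
    intro a
    funext t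
    show (V * Vᵀ) (s t) a = (Rᵀ *ᵥ g a) t
    rw [← hyy, hdot t (y a), Matrix.mulVec]
    rfl
  -- reindex the whole quadratic form
  have hqf : quadForm (V * Vᵀ) S i j = (Rᵀ *ᵥ g i) ⬝ᵥ ((Rᵀ * R)⁻¹ *ᵥ (Rᵀ *ᵥ g j)) := by
    unfold quadForm
    rw [← hB]
    have step1 : colSub (V * Vᵀ) S i ⬝ᵥ (B⁻¹ *ᵥ colSub (V * Vᵀ) S j) =
        (fun t => colSub (V * Vᵀ) S i (e t)) ⬝ᵥ
          fun t => (B⁻¹ *ᵥ colSub (V * Vᵀ) S j) (e t) := by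
      rw [dotProduct, dotProduct]
      exact (Equiv.sum_comp e fun x =>
        colSub (V * Vᵀ) S i x * (B⁻¹ *ᵥ colSub (V * Vᵀ) S j) x).symm
    have step2 : (fun t => (B⁻¹ *ᵥ colSub (V * Vᵀ) S j) (e t)) =
        (B⁻¹).submatrix e e *ᵥ fun m => colSub (V * Vᵀ) S j (e m) := by
      funext t
      show ∑ x, B⁻¹ (e t) x * colSub (V * Vᵀ) S j x = _
      rw [Matrix.mulVec, dotProduct]
      exact (Equiv.sum_comp e fun x => B⁻¹ (e t) x * colSub (V * Vᵀ) S j x).symm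
    rw [step1, step2, hBinv, hcol i, hcol j]
  rw [hqf, Matrix.mul_inv_rev, Matrix.mulVec_mulVec, mul_assoc,
    Matrix.nonsing_inv_mul Rᵀ hRtu, mul_one, Matrix.mulVec_transpose,
    ← Matrix.dotProduct_mulVec, Matrix.mulVec_mulVec, Matrix.mul_nonsing_inv R hRu,
    Matrix.one_mulVec]
  rfl
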